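/- In the algebra of differential polynomials in one variable u over a field of characteristic zero, the operators K₁ = ∂ and the skew-adjoint non-local operator H(λ) = u'(λ+∂)^{-1}u' (Sokolov's structure, as a λ-bracket {u_λ u}_H = u'(λ+∂)^{-1}u') satisfy the compatibility identity: expanding all expressions as formal series, {u_λ H(μ)}_{K₁} − {u_μ H(λ)}_{K₁} = {H(λ)_{λ+μ} u}_{K₁}, where {u_λ u}_{K₁} = λ. Concretely, the identity reads λ²(∂+μ)^{-1}u' − μ²(∂+λ)^{-1}u' + u'(λ+μ)^{-1}(λ² − μ²) = (λ+μ+∂)²(−(∂+λ)^{-1}u' + (∂+μ)^{-1}u'), as an identity in V_{λ,μ} = V[[λ^{-1}, μ^{-1}, (λ+μ)^{-1}]][λ,μ]. -/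

import Mathlib

noncomputable section

variable {V : Type*} [CommRing V]

/-- `u^{(n)} = ∂ⁿ u`. -/
def uDer (d : V → V) (u : V) (n : ℕ) : V := d^[n] u

/-- The coefficient of `λ^a μ^b` in the expansion (in `V((λ⁻¹))((μ⁻¹))`) of the left-hand
side `λ²(∂+μ)⁻¹u' − μ²(∂+λ)⁻¹u' + u'(λ+μ)⁻¹(λ² − μ²)` of the compatibility identity for
the GFZ structure `K₁ = ∂` and Sokolov's structure `H(λ) = u'(λ+∂)⁻¹u'`; here
`(∂+μ)⁻¹u' = Σ_{n≥0} (−1)ⁿ u^{(n+1)} μ^{−n−1}` and `u'(λ+μ)⁻¹(λ²−μ²) = u'λ − u'μ`. -/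
def lhs14 (d : V → V) (u : V) (a b : ℤ) : V :=
  (if a = 2 ∧ b ≤ -1 then ((-1 : ℤ) ^ (-b - 1).toNat) • uDer d u (-b).toNat else 0)
    - (if b = 2 ∧ a ≤ -1 then ((-1 : ℤ) ^ (-a - 1).toNat) • uDer d u (-a).toNat else 0)
    + (if a = 1 ∧ b = 0 then uDer d u 1 else 0)
    - (if a = 0 ∧ b = 1 then uDer d u 1 else 0)

/-- The coefficient of `λ^a μ^b` of `X = −(∂+λ)⁻¹u' + (∂+μ)⁻¹u'`. -/
def Xexp (d : V → V) (u : V) (a b : ℤ) : V :=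
  (if b = 0 ∧ a ≤ -1 then -(((-1 : ℤ) ^ (-a - 1).toNat) • uDer d u (-a).toNat) else 0)
    + (if a = 0 ∧ b ≤ -1 then ((-1 : ℤ) ^ (-b - 1).toNat) • uDer d u (-b).toNat else 0)

/-- Application of `(λ + μ + ∂)` on the level of expansion coefficients. -/
def opL (d : V → V) (x : ℤ → ℤ → V) (a b : ℤ) : V :=
  x (a - 1) b + x a (b - 1) + d (x a b)

/-- Auxiliary: the coefficient of `λ^a` in `(∂+λ)⁻¹u'`. -/
def fAux (d : V → V) (u : V) (a : ℤ) : V :=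
  if a ≤ -1 then ((-1 : ℤ) ^ (-a - 1).toNat) • uDer d u (-a).toNat else 0

lemma d_zero' (d : V → V) (hd_add : ∀ a b : V, d (a + b) = d a + d b) : d 0 = 0 := by
  have h := hd_add 0 0
  simp only [add_zero] at h
  exact left_eq_add.mp h

lemma d_neg' (d : V → V) (hd_add : ∀ a b : V, d (a + b) = d a + d b) (x : V) :
    d (-x) = -d x := by
  have h := hd_add x (-x)
  rw [add_neg_cancel, d_zero' d hd_add] at h
  exact eq_neg_of_add_eq_zero_right h.symm

lemma d_fAux (d : V → V) (hd_add : ∀ a b : V, d (a + b) = d a + d b) (u : V) (a : ℤ) :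
    d (fAux d u a) = -fAux d u (a - 1) + (if a = 0 then uDer d u 1 else 0) := by
  have hdz : ∀ (z : ℤ) (x : V), d (z • x) = z • d x := fun z x =>
    map_zsmul (AddMonoidHom.mk' d hd_add) z x
  unfold fAux
  by_cases ha : a ≤ -1
  · have ha1 : a - 1 ≤ -1 := by omega
    rw [if_pos ha, if_pos ha1, if_neg (by omega : ¬ a = 0), hdz]
    have h1 : (-(a - 1) - 1).toNat = (-a - 1).toNat + 1 := by omega
    have h2 : (-(a - 1)).toNat = (-a).toNat + 1 := by omega
    rw [h1, h2]
    unfold uDer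
    rw [Function.iterate_succ_apply' d ((-a).toNat) u, pow_succ]
    simp [mul_smul]
  · rw [if_neg ha, d_zero' d hd_add]
    by_cases ha0 : a = 0
    · subst ha0
      norm_num
    · rw [if_neg (by omega : ¬ a - 1 ≤ -1), if_neg ha0]
      simp

lemma Xexp_eq (d : V → V) (u : V) (a b : ℤ) :
    Xexp d u a b = -(if b = 0 then fAux d u a else 0) + (if a = 0 then fAux d u b else 0) := by
  unfold Xexp fAux
  split_ifs <;> simp_all <;> omega

lemma lhs14_eq (d : V → V) (u : V) (a b : ℤ) :
    lhs14 d u a b = (if a = 2 then fAux d u b else 0) - (if b = 2 then fAux d u a else 0)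
      + (if a = 1 ∧ b = 0 then uDer d u 1 else 0)
      - (if a = 0 ∧ b = 1 then uDer d u 1 else 0) := by
  unfold lhs14 fAux
  split_ifs <;> simp_all <;> omega

lemma opL_Xexp (d : V → V) (hd_add : ∀ a b : V, d (a + b) = d a + d b) (u : V) (a b : ℤ) :
    opL d (Xexp d u) a b
      = (if a = 1 then fAux d u b else 0) - (if b = 1 then fAux d u a else 0) := by
  unfold opL
  simp only [Xexp_eq, hd_add, d_neg' d hd_add, apply_ite d, d_zero' d hd_add,
    d_fAux d hd_add]
  split_ifs <;> first | omega | abel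

set_option maxHeartbeats 2000000 in
theorem stmt14 (d : V → V)
    (hd_add : ∀ a b : V, d (a + b) = d a + d b)
    (hd_mul : ∀ a b : V, d (a * b) = d a * b + a * d b)
    (u : V) :
    ∀ a b : ℤ, lhs14 d u a b = opL d (opL d (Xexp d u)) a b := by
  intro a b
  rw [show opL d (opL d (Xexp d u)) a b
      = opL d (Xexp d u) (a - 1) b + opL d (Xexp d u) a (b - 1) + d (opL d (Xexp d u) a b)
      from rfl]
  simp only [opL_Xexp d hd_add, lhs14_eq, sub_eq_add_neg, hd_add, d_neg' d hd_add,
    apply_ite d, d_zero' d hd_add, d_fAux d hd_add]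
  split_ifs <;> first | omega | abel

end
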